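/- Let p be a prime, Λ = ℤ_p[[T]], and let f ∈ Λ be nonzero. Multiplication by T on the quotient module Λ/(f) is injective if and only if the constant coefficient f(0) is nonzero. -/

import Mathlib

/-- For nonzero `f ∈ Λ = ℤ_[p][[T]]`, multiplication by `T` on the
quotient module `Λ/(f)` is injective if and only if the constant coefficient
`f(0)` is nonzero. -/
theorem mul_X_injective_on_quotient_iff_constantCoeff_ne_zero
    (p : ℕ) [Fact p.Prime] (f : PowerSeries ℤ_[p]) (hf : f ≠ 0) :
    Function.Injective
        (fun m : PowerSeries ℤ_[p] ⧸ Ideal.span {f} =>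
          (PowerSeries.X : PowerSeries ℤ_[p]) • m) ↔
      PowerSeries.constantCoeff f ≠ 0 := by
  have key : ∀ a : PowerSeries ℤ_[p],
      (PowerSeries.X : PowerSeries ℤ_[p]) • (Ideal.Quotient.mk (Ideal.span {f}) a)
        = Ideal.Quotient.mk (Ideal.span {f}) (PowerSeries.X * a) := by
    intro a
    rfl
  constructor
  · intro h hc
    obtain ⟨g, hg⟩ : (PowerSeries.X : PowerSeries ℤ_[p]) ∣ f := PowerSeries.X_dvd_iff.mpr hc
    have hg0 : g ≠ 0 := by rintro rfl; rw [mul_zero] at hg; exact hf hg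
    have hz : Ideal.Quotient.mk (Ideal.span {f}) g = 0 := by
      have := h (a₁ := Ideal.Quotient.mk (Ideal.span {f}) g) (a₂ := 0) ?_
      · exact this
      · simp only [key, smul_zero]
        rw [Ideal.Quotient.eq_zero_iff_mem, Ideal.mem_span_singleton, ← hg]
    rw [Ideal.Quotient.eq_zero_iff_mem, Ideal.mem_span_singleton] at hz
    obtain ⟨c, hc2⟩ := hz
    have hmul : g * (1 - PowerSeries.X * c) = 0 := by
      rw [hg] at hc2
      linear_combination hc2
    rcases mul_eq_zero.mp hmul with h1 | h2
    · exact hg0 h1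
    · have : (PowerSeries.constantCoeff (R := ℤ_[p])) (1 - PowerSeries.X * c) = 0 := by rw [h2]; simp
      simp at this
  · intro hc a b hab
    obtain ⟨x, rfl⟩ := Ideal.Quotient.mk_surjective a
    obtain ⟨y, rfl⟩ := Ideal.Quotient.mk_surjective b
    simp only [key] at hab
    rw [Ideal.Quotient.mk_eq_mk_iff_sub_mem, Ideal.mem_span_singleton] at hab
    obtain ⟨q, hq⟩ := hab
    have hq' : PowerSeries.X * (x - y) = f * q := by rw [← hq]; ring
    have hq0 : (PowerSeries.constantCoeff (R := ℤ_[p])) q = 0 := by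
      have := congrArg (PowerSeries.constantCoeff (R := ℤ_[p])) hq'
      simp only [map_mul, PowerSeries.constantCoeff_X, zero_mul] at this
      rcases mul_eq_zero.mp this.symm with h1 | h2
      · exact absurd h1 hc
      · exact h2
    obtain ⟨q', rfl⟩ := PowerSeries.X_dvd_iff.mpr hq0
    have hxne : (PowerSeries.X : PowerSeries ℤ_[p]) ≠ 0 := PowerSeries.X_ne_zero
    have : x - y = f * q' := by
      apply mul_left_cancel₀ hxne
      rw [hq']; ring
    rw [Ideal.Quotient.mk_eq_mk_iff_sub_mem, Ideal.mem_span_singleton]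
    exact ⟨q', this⟩
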